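/- Let K ⊂ ℝⁿ be a centrally symmetric convex body (convex, compact, symmetric about the origin) and let k be a positive integer. If vol(K) > 2ⁿ·k, then K contains at least k pairs {x, −x} of nonzero points of the lattice ℤⁿ; in particular, K contains at least 2k nonzero lattice points. -/

import Mathlib

open MeasureTheory Set
open scoped Pointwise

/-- The strict lexicographic relation on `Fin n → ℝ`. -/
def vdcPlex {n : ℕ} (a b : Fin n → ℝ) : Prop :=
  Pi.Lex (· < ·) (fun {_} => (· < ·)) a b

lemma vdcPlex_trichotomous {n : ℕ} {a b : Fin n → ℝ} (h : a ≠ b) :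
    vdcPlex a b ∨ vdcPlex b a := by
  have := (Pi.isTrichotomous_lex (β := fun _ : Fin n => ℝ) (· < ·)
    (fun {_} => (· < ·)) (IsWellFounded.wf)).trichotomous a b
  by_contra hne
  push_neg at hne
  exact h (this hne.1 hne.2)

lemma vdcPlex_irrefl {n : ℕ} (a : Fin n → ℝ) : ¬ vdcPlex a a := by
  rintro ⟨i, -, hlt⟩
  exact lt_irrefl _ hlt

lemma vdcPlex_trans {n : ℕ} {a b c : Fin n → ℝ}
    (h1 : vdcPlex a b) (h2 : vdcPlex b c) : vdcPlex a c := by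
  obtain ⟨i, hi, hlt⟩ := h1
  obtain ⟨i', hi', hlt'⟩ := h2
  rcases lt_trichotomy i i' with h | rfl | h
  · exact ⟨i, fun j hj => (hi j hj).trans (hi' j (hj.trans h)),
      hlt.trans_le (le_of_eq (hi' i h))⟩
  · exact ⟨i, fun j hj => (hi j hj).trans (hi' j hj), hlt.trans hlt'⟩
  · exact ⟨i', fun j hj => (hi j (hj.trans h)).trans (hi' j hj), (hi i' h) ▸ hlt'⟩

lemma vdcPlex_add {n : ℕ} {a b c d : Fin n → ℝ}
    (h1 : vdcPlex a b) (h2 : vdcPlex c d) : vdcPlex (a + c) (b + d) := by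
  obtain ⟨i, hi, hlt⟩ := h1
  obtain ⟨i', hi', hlt'⟩ := h2
  rcases lt_trichotomy i i' with h | rfl | h
  · refine ⟨i, fun j hj => ?_, ?_⟩
    · simp only [Pi.add_apply]; rw [hi j hj, hi' j (hj.trans h)]
    · simp only [Pi.add_apply]
      exact add_lt_add_of_lt_of_le hlt (le_of_eq (hi' i h))
  · refine ⟨i, fun j hj => ?_, ?_⟩
    · simp only [Pi.add_apply]; rw [hi j hj, hi' j hj]
    · simp only [Pi.add_apply]; exact add_lt_add hlt hlt'
  · refine ⟨i', fun j hj => ?_, ?_⟩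
    · simp only [Pi.add_apply]; rw [hi j (hj.trans h), hi' j hj]
    · simp only [Pi.add_apply]
      exact add_lt_add_of_le_of_lt (le_of_eq (hi i' h)) hlt'

/-- A finite nonempty set has a maximal element w.r.t. a transitive trichotomous relation. -/
lemma exists_rel_max {α : Type*} (r : α → α → Prop)
    (htri : ∀ a b : α, a ≠ b → r a b ∨ r b a)
    (htrans : ∀ {a b c : α}, r a b → r b c → r a c)
    (V : Finset α) (hV : V.Nonempty) :
    ∃ m ∈ V, ∀ g ∈ V, g ≠ m → r g m := by
  classical
  induction V using Finset.induction with
  | empty => simp at hV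
  | @insert a V' ha ih =>
      rcases V'.eq_empty_or_nonempty with rfl | hne
      · exact ⟨a, by simp, fun g hg hne => absurd (by simpa using hg) hne⟩
      · obtain ⟨m', hm'V, hm'⟩ := ih hne
        have ham' : a ≠ m' := fun he => ha (he ▸ hm'V)
        rcases htri a m' ham' with hr | hr
        · refine ⟨m', Finset.mem_insert_of_mem hm'V, fun g hg hgne => ?_⟩
          rcases Finset.mem_insert.mp hg with rfl | hg'
          · exact hr
          · exact hm' g hg' hgne
        · refine ⟨a, Finset.mem_insert_self a V', fun g hg hgne => ?_⟩
          rcases Finset.mem_insert.mp hg with rfl | hg'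
          · exact absurd rfl hgne
          · rcases eq_or_ne g m' with rfl | hgm'
            · exact hr
            · exact htrans (hm' g hg' hgm') hr
open scoped Pointwise

lemma tsum_indicator_le_of_encard_le {ι : Type*} [Countable ι] (S : Set ι) (k : ℕ)
    (hS : S.encard ≤ k) : ∑' i : ι, S.indicator 1 i ≤ (k : ENNReal) := by
  have hfin : S.Finite := Set.finite_of_encard_le_coe hS
  rw [tsum_eq_sum (s := hfin.toFinset) (fun i hi => Set.indicator_of_notMem
    (by simpa using hi) 1)]
  calc ∑ i ∈ hfin.toFinset, S.indicator 1 i ≤ ∑ _i ∈ hfin.toFinset, 1 := by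
        refine Finset.sum_le_sum fun i _ => ?_
        classical
        by_cases h : i ∈ S <;> simp [h]
    _ = (hfin.toFinset.card : ENNReal) := by simp
    _ ≤ (k : ENNReal) := by
        have := hS
        rw [hfin.encard_eq_coe_toFinset_card] at this
        exact_mod_cast this

lemma blichfeldt_mult {E L : Type*} [MeasurableSpace E] {μ : Measure E} {F s : Set E}
    [AddCommGroup L] [Countable L] [AddAction L E] [MeasurableSpace L] [MeasurableVAdd L E]
    [VAddInvariantMeasure L E μ] (fund : IsAddFundamentalDomain L F μ)
    (hS : NullMeasurableSet s μ) (k : ℕ) (h : μ F * k < μ s) :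
    ∃ x : E, ∃ V : Finset L, V.card = k + 1 ∧ ∀ g ∈ V, x ∈ g +ᵥ s := by
  classical
  by_contra hcon
  push_neg at hcon
  have key : ∀ x : E, {g : L | x ∈ g +ᵥ s}.encard ≤ k := by
    intro x
    by_contra hx
    push_neg at hx
    obtain ⟨t, hts, htc⟩ := Set.exists_subset_encard_eq (Order.add_one_le_of_lt hx)
    have htfin : t.Finite := Set.finite_of_encard_eq_coe (by exact_mod_cast htc)
    obtain ⟨g, hg, hgs⟩ := hcon x htfin.toFinset (by
      have h2 := htfin.encard_eq_coe_toFinset_card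
      rw [htc] at h2
      exact_mod_cast h2.symm)
    exact hgs (hts (htfin.mem_toFinset.mp hg))
  have hmeas : ∀ g : L, NullMeasurableSet ((g +ᵥ s) ∩ F) μ :=
    fun g => (hS.vadd g).inter fund.nullMeasurableSet
  have haem : ∀ g : L, AEMeasurable (((g +ᵥ s) ∩ F).indicator (1 : E → ENNReal)) μ := by
    intro g
    obtain ⟨t, htm, hts⟩ := hmeas g
    exact (aemeasurable_indicator_iff₀ (hmeas g)).mpr aemeasurable_const.restrict
  have hb : μ s ≤ μ F * k := by
    calc μ s = ∑' g : L, μ ((g +ᵥ s) ∩ F) := fund.measure_eq_tsum s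
      _ = ∑' g : L, ∫⁻ x, ((g +ᵥ s) ∩ F).indicator 1 x ∂μ := by
          simp_rw [fun g : L => lintegral_indicator_one₀ (hmeas g)]
      _ = ∫⁻ x, ∑' g : L, ((g +ᵥ s) ∩ F).indicator 1 x ∂μ := (lintegral_tsum haem).symm
      _ ≤ ∫⁻ x, F.indicator (fun _ => (k : ENNReal)) x ∂μ := by
          refine lintegral_mono fun x => ?_
          by_cases hxF : x ∈ F
          · rw [Set.indicator_of_mem hxF]
            refine le_trans (ENNReal.tsum_le_tsum fun g => ?_)
              (tsum_indicator_le_of_encard_le {g : L | x ∈ g +ᵥ s} k (key x))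
            by_cases hg : x ∈ (g +ᵥ s) ∩ F
            · rw [Set.indicator_of_mem hg, Set.indicator_of_mem (by exact hg.1)]
              simp
            · simp [Set.indicator_of_notMem hg]
          · rw [Set.indicator_of_notMem hxF]
            have : ∀ g : L, ((g +ᵥ s) ∩ F).indicator (1 : E → ENNReal) x = 0 :=
              fun g => Set.indicator_of_notMem (fun hx => hxF hx.2) 1
            simp [this]
      _ = μ F * k := by rw [lintegral_indicator_const₀ fund.nullMeasurableSet, mul_comm]
  exact absurd h (not_lt.mpr hb)
lemma int_coords {n : ℕ} {x : Fin n → ℝ}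
    (hx : x ∈ Submodule.span ℤ (Set.range ⇑(Pi.basisFun ℝ (Fin n)))) :
    ∀ j, ∃ m : ℤ, x j = m := by
  induction hx using Submodule.span_induction with
  | mem x hx =>
      obtain ⟨i, rfl⟩ := hx
      intro j
      refine ⟨if i = j then 1 else 0, ?_⟩
      simp [Pi.basisFun_apply, Pi.single_apply, eq_comm]
  | zero => exact fun j => ⟨0, by simp⟩
  | add x y _ _ hx hy =>
      intro j
      obtain ⟨m, hm⟩ := hx j; obtain ⟨m', hm'⟩ := hy j
      exact ⟨m + m', by simp [hm, hm']⟩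
  | smul z x _ hx =>
      intro j
      obtain ⟨m, hm⟩ := hx j
      exact ⟨z * m, by simp [hm, zsmul_eq_mul]⟩

/-- **Van der Corput's generalization of Minkowski's theorem.**
If K ⊂ ℝⁿ is a centrally symmetric convex body with volume > 2ⁿ·k, then K contains
at least k pairs {x, −x} of nonzero lattice points: there is a set S of at least k
nonzero lattice points of K, no two of which are negatives of each other (so together
with their negatives, which also lie in K by symmetry, they give at least 2k nonzero
lattice points of K). -/
theorem van_der_corput (n k : ℕ) (hk : 0 < k) (K : Set (Fin n → ℝ))
    (hconv : Convex ℝ K) (hcomp : IsCompact K)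
    (hsymm : ∀ x ∈ K, -x ∈ K)
    (hvol : (2 : ENNReal) ^ n * k < volume K) :
    ∃ S : Finset (Fin n → ℤ), k ≤ S.card ∧
      (∀ x ∈ S, x ≠ 0 ∧ (fun j => ((x j : ℤ) : ℝ)) ∈ K) ∧
      (∀ x ∈ S, ∀ y ∈ S, x ≠ -y) := by
  classical
  set b := Pi.basisFun ℝ (Fin n) with hb
  set F := ZSpan.fundamentalDomain b with hFdef
  have fund : IsAddFundamentalDomain (Submodule.span ℤ (Set.range ⇑b)).toAddSubgroup F volume :=
    ZSpan.isAddFundamentalDomain' b volume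
  set L := (Submodule.span ℤ (Set.range ⇑b)).toAddSubgroup with hL
  have hF : volume F = 1 := by
    rw [hFdef, hb, ZSpan.fundamentalDomain_pi_basisFun]
    simp [volume_pi_pi]
  set s : Set (Fin n → ℝ) := (2⁻¹ : ℝ) • K with hs_def
  have hSmeas : NullMeasurableSet s volume := (hconv.smul _).nullMeasurableSet _
  have h2n : ((2 : ENNReal) ^ n)⁻¹ ≠ 0 := by simp
  have h2nt : ((2 : ENNReal) ^ n)⁻¹ ≠ ⊤ := by simp [ENNReal.inv_ne_top]
  have hvols : volume F * k < volume s := by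
    rw [hF, one_mul, hs_def,
      Measure.addHaar_smul_of_nonneg volume (by norm_num : (0:ℝ) ≤ 2⁻¹) K]
    have hfr : Module.finrank ℝ (Fin n → ℝ) = n := by simp [Module.finrank_pi]
    rw [hfr]
    have h2 : ENNReal.ofReal ((2:ℝ)⁻¹) = (2 : ENNReal)⁻¹ := by
      rw [ENNReal.ofReal_inv_of_pos (by norm_num)]
      norm_num
    have hof : ENNReal.ofReal ((2⁻¹ : ℝ) ^ n) = ((2 : ENNReal) ^ n)⁻¹ := by
      rw [ENNReal.ofReal_pow (by norm_num), h2, ENNReal.inv_pow]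
    rw [hof]
    calc (k : ENNReal) = ((2 : ENNReal) ^ n)⁻¹ * ((2 : ENNReal) ^ n * k) := by
          rw [← mul_assoc, ENNReal.inv_mul_cancel (by simp) (by simp), one_mul]
      _ < ((2 : ENNReal) ^ n)⁻¹ * volume K :=
          (ENNReal.mul_lt_mul_iff_right h2n h2nt).mpr hvol
  haveI : Countable ↥L := inferInstanceAs (Countable (Submodule.span ℤ (Set.range ⇑b)))
  obtain ⟨x, V, hVcard, hV⟩ := blichfeldt_mult fund hSmeas k hvols
  have hVne : V.Nonempty := Finset.card_pos.mp (by omega)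
  obtain ⟨m, hmV, hmax⟩ := exists_rel_max (fun g g' : ↥L => vdcPlex (g : Fin n → ℝ) g')
    (fun g g' hne => vdcPlex_trichotomous (fun he => hne (Subtype.coe_injective he)))
    (fun h1 h2 => vdcPlex_trans h1 h2) V hVne
  -- integer coordinates
  set ψ : L → (Fin n → ℤ) := fun g => fun j => ⌊(g : Fin n → ℝ) j⌋ with hψ
  have hcast : ∀ g : L, ∀ j, ((ψ g j : ℤ) : ℝ) = (g : Fin n → ℝ) j := by
    intro g j
    obtain ⟨mz, hmz⟩ := int_coords ((Submodule.mem_toAddSubgroup _).mp g.2) j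
    simp only [hψ]
    rw [hmz, Int.floor_intCast]
  -- membership in K of differences
  have hdiffK : ∀ g ∈ V, ((m : Fin n → ℝ) - (g : Fin n → ℝ)) ∈ K := by
    intro g hgV
    obtain ⟨p, hp, hpe⟩ := hV m hmV
    obtain ⟨q, hq, hqe⟩ := hV g hgV
    obtain ⟨a, ha, rfl⟩ := hp
    obtain ⟨c, hc, rfl⟩ := hq
    have hsum : (m : Fin n → ℝ) + (2⁻¹ : ℝ) • a = (g : Fin n → ℝ) + (2⁻¹ : ℝ) • c := by
      have h0 := hpe.trans hqe.symm
      simpa [AddSubgroup.vadd_def] using h0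
    have hmg : (m : Fin n → ℝ) - (g : Fin n → ℝ) = (2⁻¹ : ℝ) • c + (2⁻¹ : ℝ) • (-a) := by
      rw [smul_neg, ← sub_eq_add_neg, sub_eq_sub_iff_add_eq_add, add_comm ((2⁻¹ : ℝ) • c) _]
      exact hsum
    rw [hmg]
    exact hconv hc (hsymm a ha) (by norm_num) (by norm_num) (by norm_num)
  have hlt : ∀ g ∈ V.erase m, vdcPlex (g : Fin n → ℝ) (m : Fin n → ℝ) := by
    intro g hg
    rw [Finset.mem_erase] at hg
    exact hmax g hg.2 hg.1
  have hinj : Set.InjOn (fun g : ↥L => ψ (m - g)) (V.erase m) := by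
    intro g hg g' hg' he
    have hco : ((m - g : L) : Fin n → ℝ) = ((m - g' : L) : Fin n → ℝ) := by
      funext j
      rw [← hcast (m - g) j, ← hcast (m - g') j]
      simp only at he
      rw [he]
    have := Subtype.coe_injective hco
    exact (sub_right_injective this)
  refine ⟨(V.erase m).image (fun g => ψ (m - g)), ?_, ?_, ?_⟩
  · rw [Finset.card_image_of_injOn hinj, Finset.card_erase_of_mem hmV, hVcard]
    omega
  · intro u hu
    obtain ⟨g, hg, rfl⟩ := Finset.mem_image.mp hu
    constructor
    · intro h0
      have hz : ((m - g : L) : Fin n → ℝ) = 0 := by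
        funext j
        rw [← hcast (m - g) j, h0]
        simp
      have : (m : L) = g := by
        have h1 : ((m - g : L) : Fin n → ℝ) = ((0 : L) : Fin n → ℝ) := by
          rw [hz, ZeroMemClass.coe_zero]
        exact sub_eq_zero.mp (Subtype.coe_injective h1)
      exact (Finset.mem_erase.mp hg).1 this.symm
    · have hfe : (fun j => ((ψ (m - g) j : ℤ) : ℝ)) = (m : Fin n → ℝ) - (g : Fin n → ℝ) := by
        funext j
        rw [hcast (m - g) j]
        simp
      rw [hfe]
      exact hdiffK g (Finset.mem_of_mem_erase hg)
  · intro u hu u' hu' hneg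
    obtain ⟨g, hg, rfl⟩ := Finset.mem_image.mp hu
    obtain ⟨g', hg', rfl⟩ := Finset.mem_image.mp hu'
    have hE : ((m - g : L) : Fin n → ℝ) = -((m - g' : L) : Fin n → ℝ) := by
      funext j
      have h1 := hcast (m - g) j
      have h2 := hcast (m - g') j
      have h3 : ψ (m - g) j = -(ψ (m - g') j) := by
        rw [hneg]
        simp
      have h4 : ((ψ (m - g) j : ℤ) : ℝ) = -((ψ (m - g') j : ℤ) : ℝ) := by
        rw [h3]; push_cast; ring
      rw [h1, h2] at h4
      simpa using h4
    have hsum : (g : Fin n → ℝ) + (g' : Fin n → ℝ) = (m : Fin n → ℝ) + (m : Fin n → ℝ) := by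
      have h1 : (m : Fin n → ℝ) - (g : Fin n → ℝ) = (g' : Fin n → ℝ) - (m : Fin n → ℝ) := by
        have := hE
        push_cast at this
        rw [neg_sub] at this
        exact this
      have h2 := sub_eq_sub_iff_add_eq_add.mp h1
      rw [add_comm (g : Fin n → ℝ) (g' : Fin n → ℝ)]
      rw [add_comm] at h2
      exact h2.symm
    have hlt2 : vdcPlex ((g : Fin n → ℝ) + (g' : Fin n → ℝ))
        ((m : Fin n → ℝ) + (m : Fin n → ℝ)) :=
      vdcPlex_add (hlt g hg) (hlt g' hg')
    rw [hsum] at hlt2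
    exact vdcPlex_irrefl _ hlt2
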